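/- Let T be a recursively pointed function tree. Then for every Y ∈ 2^ω, T ≤_T Y if and only if there exists X ∈ [T] with X ≡_T Y. -/

import Mathlib

open scoped ENNReal

attribute [local instance] Classical.propDecidable

/-- Cantor space `2^ω`. -/
abbrev Cantor := ℕ → Bool

/-- The length-`n` initial segment `X↾n` of `X ∈ 2^ω`, as a finite binary string. -/
def seg (X : Cantor) (n : ℕ) : List Bool := (List.range n).map X

/-- `σ ≺ X` : the finite string `σ` is an initial segment of `X`. -/
def PrefixOfSeq (σ : List Bool) (X : Cantor) : Prop := seg X σ.length = σ

/-- The basic clopen set `[σ]` of all infinite sequences extending `σ`. -/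
def cyl (σ : List Bool) : Set Cantor := {X | PrefixOfSeq σ X}

/-- Partial recursive functions relative to a (total) oracle `O : ℕ → ℕ`:
the oracle version of `Nat.Partrec`. -/
inductive OracleRecursiveIn (O : ℕ → ℕ) : (ℕ →. ℕ) → Prop
  | oracle : OracleRecursiveIn O (fun n => Part.some (O n))
  | zero : OracleRecursiveIn O (pure 0)
  | succ : OracleRecursiveIn O Nat.succ
  | left : OracleRecursiveIn O ↑fun n : ℕ => n.unpair.1
  | right : OracleRecursiveIn O ↑fun n : ℕ => n.unpair.2
  | pair {f g} : OracleRecursiveIn O f → OracleRecursiveIn O g →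
      OracleRecursiveIn O fun n => Nat.pair <$> f n <*> g n
  | comp {f g} : OracleRecursiveIn O f → OracleRecursiveIn O g →
      OracleRecursiveIn O fun n => g n >>= f
  | prec {f g} : OracleRecursiveIn O f → OracleRecursiveIn O g →
      OracleRecursiveIn O (Nat.unpaired fun a n =>
        n.rec (f a) fun y IH => do let i ← IH; g (Nat.pair a (Nat.pair y i)))
  | rfind {f} : OracleRecursiveIn O f →
      OracleRecursiveIn O fun a => Nat.rfind fun n => (fun m => m = 0) <$> f (Nat.pair a n)

/-- A (total) function between coded types is recursive in the oracle `O`. -/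
def RecIn {α β : Type} [Primcodable α] [Primcodable β] (O : ℕ → ℕ) (f : α → β) : Prop :=
  OracleRecursiveIn O fun n =>
    (Part.ofOption (Encodable.decode (α := α) n)).bind fun a => Part.some (Encodable.encode (f a))

/-- A set `X ∈ 2^ω` viewed as a total oracle. -/
def oracleOf (X : Cantor) : ℕ → ℕ := fun n => cond (X n) 1 0

/-- A function between coded types viewed as a total oracle on `ℕ`. -/
def oracleFn {α β : Type} [Primcodable α] [Primcodable β] (f : α → β) : ℕ → ℕ :=
  fun n => Encodable.encode ((Encodable.decode (α := α) n).map f)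

/-- Turing reducibility `X ≤_T Y` between elements of `2^ω`. -/
def TRed (X Y : Cantor) : Prop := RecIn (oracleOf Y) X

/-- Turing equivalence `X ≡_T Y`. -/
def TEquiv (X Y : Cantor) : Prop := TRed X Y ∧ TRed Y X

/-- The Turing degree of `Z`, as a set of reals. -/
def degCl (Z : Cantor) : Set Cantor := {Y | TEquiv Y Z}

/-- Many-one reducibility `X ≤_m Y` between subsets of `ω` (as elements of `2^ω`). -/
def ManyOneRed (X Y : Cantor) : Prop := ∃ g : ℕ → ℕ, Computable g ∧ ∀ n, X n = Y (g n)

/-- The recursive join `A ⊕ B`. -/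
def join (A B : Cantor) : Cantor := fun n => if n % 2 = 0 then A (n / 2) else B (n / 2)

/-- `X` is of minimal Turing degree. -/
def MinimalDeg (X : Cantor) : Prop :=
  ¬Computable X ∧ ∀ Y : Cantor, TRed Y X → Computable Y ∨ TRed X Y

/-- `B` is a minimal cover of the countable class `S`: `B` strictly bounds every member of `S`,
and everything below `B` is either below some member of `S` or joins with one above `B`. -/
def MinimalCoverOf (B : Cantor) (S : Set Cantor) : Prop :=
  (∀ A ∈ S, TRed A B ∧ ¬TRed B A) ∧
  ∀ C : Cantor, TRed C B → ∃ A ∈ S, TRed C A ∨ TRed B (join A C)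

/-- `R` is of hyperimmune-free degree: every function it computes is dominated by a
computable function. -/
def HypImmFree (R : Cantor) : Prop :=
  ∀ f : ℕ → ℕ, RecIn (oracleOf R) f → ∃ g : ℕ → ℕ, Computable g ∧ ∀ n, f n ≤ g n

/-- `d` is a supermartingale. -/
def IsSupermartingale (d : List Bool → ℝ) : Prop :=
  (∀ σ, 0 ≤ d σ) ∧ ∀ σ, d (σ ++ [false]) + d (σ ++ [true]) ≤ 2 * d σ

/-- `d` is a martingale. -/
def IsMartingale (d : List Bool → ℝ) : Prop :=
  (∀ σ, 0 ≤ d σ) ∧ ∀ σ, d (σ ++ [false]) + d (σ ++ [true]) = 2 * d σ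

/-- `d` is lower semicomputable (r.e.) relative to oracle `O`: it is the monotone limit of a
uniformly `O`-recursive sequence of rationals. -/
def LowerSemicomputableIn (O : ℕ → ℕ) (d : List Bool → ℝ) : Prop :=
  ∃ q : List Bool × ℕ → ℚ, RecIn O q ∧ (∀ σ, Monotone fun n => q (σ, n)) ∧
    ∀ σ, Filter.Tendsto (fun n => (q (σ, n) : ℝ)) Filter.atTop (nhds (d σ))

/-- `d` is lower semicomputable (an r.e. supermartingale value function). -/
def LowerSemicomputable (d : List Bool → ℝ) : Prop :=
  ∃ q : List Bool × ℕ → ℚ, Computable q ∧ (∀ σ, Monotone fun n => q (σ, n)) ∧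
    ∀ σ, Filter.Tendsto (fun n => (q (σ, n) : ℝ)) Filter.atTop (nhds (d σ))

/-- `d` `s`-succeeds on `X`: `limsup_n d(X↾n)/2^{(1-s)n} = ∞`
(equivalently, the sequence is unbounded). -/
def Succeeds (d : List Bool → ℝ) (s : ℚ) (X : Cantor) : Prop :=
  ∀ C : ℝ, ∃ n : ℕ, C * (2 : ℝ) ^ ((1 - (s : ℝ)) * n) ≤ d (seg X n)

/-- `d` strongly `s`-succeeds on `X`: `liminf_n d(X↾n)/2^{(1-s)n} = ∞`. -/
def SucceedsStrongly (d : List Bool → ℝ) (s : ℚ) (X : Cantor) : Prop :=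
  ∀ C : ℝ, ∃ N : ℕ, ∀ n ≥ N, C * (2 : ℝ) ^ ((1 - (s : ℝ)) * n) ≤ d (seg X n)

/-- Generic dimension notion: the infimum of all `s ∈ ℚ ∩ [0,1]` such that some supermartingale
satisfying `P` succeeds (in the sense of `Succ`) on every member of `A` (with value `1` if there
is no such `s`). -/
noncomputable def dimVia (P : (List Bool → ℝ) → Prop)
    (Succ : (List Bool → ℝ) → ℚ → Cantor → Prop) (A : Set Cantor) : ℝ≥0∞ :=
  sInf ({1} ∪ {x : ℝ≥0∞ | ∃ s : ℚ, 0 ≤ s ∧ s ≤ 1 ∧ x = ENNReal.ofReal (s : ℝ) ∧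
    ∃ d, IsSupermartingale d ∧ P d ∧ ∀ X ∈ A, Succ d s X})

/-- Effective Hausdorff dimension of a class (Lutz). -/
noncomputable def effDim (A : Set Cantor) : ℝ≥0∞ := dimVia LowerSemicomputable Succeeds A

/-- Effective Hausdorff dimension relative to oracle `O`. -/
noncomputable def effDimIn (O : ℕ → ℕ) (A : Set Cantor) : ℝ≥0∞ :=
  dimVia (LowerSemicomputableIn O) Succeeds A

/-- Effective packing dimension of a class. -/
noncomputable def effPDim (A : Set Cantor) : ℝ≥0∞ := dimVia LowerSemicomputable SucceedsStrongly A

/-- Effective packing dimension relative to oracle `O`. -/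
noncomputable def effPDimIn (O : ℕ → ℕ) (A : Set Cantor) : ℝ≥0∞ :=
  dimVia (LowerSemicomputableIn O) SucceedsStrongly A

/-- (Classical) Hausdorff dimension of a subset of `2^ω`, via the point-to-set principle:
the infimum over all oracles `Z` of the effective-in-`Z` Hausdorff dimension. -/
noncomputable def hausdorffDim (A : Set Cantor) : ℝ≥0∞ := ⨅ Z : Cantor, effDimIn (oracleOf Z) A

/-- (Classical) packing dimension of a subset of `2^ω`, via the point-to-set principle. -/
noncomputable def packingDim (A : Set Cantor) : ℝ≥0∞ := ⨅ Z : Cantor, effPDimIn (oracleOf Z) A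

/-- The canonical enumeration `n ↦ D_n` of finite subsets of `ω`: `D_n` is the set of
positions of 1-bits in the binary expansion of `n`. -/
def Dfin (n : ℕ) : Finset ℕ := (Finset.range n).filter fun i => n.testBit i = true

/-- `A` is recursively traceable. -/
def RecTraceable (A : Cantor) : Prop :=
  ∃ b : ℕ → ℕ, Computable b ∧ ∀ f : ℕ → ℕ, RecIn (oracleOf A) f →
    ∃ g : ℕ → ℕ, Computable g ∧ ∀ n, (Dfin (g n)).card ≤ b n ∧ f n ∈ Dfin (g n)

/-- A function tree: `T(σi)` properly extends `T(σ)`, and `T(σ0)`, `T(σ1)` are incomparable. -/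
structure FunTree where
  f : List Bool → List Bool
  extend : ∀ σ (i : Bool), f σ <+: f (σ ++ [i]) ∧ (f σ).length < (f (σ ++ [i])).length
  split : ∀ σ, ¬ f (σ ++ [false]) <+: f (σ ++ [true]) ∧ ¬ f (σ ++ [true]) <+: f (σ ++ [false])

/-- `[T]`, the set of infinite paths through the function tree `T`. -/
def Paths (T : FunTree) : Set Cantor :=
  {X | ∃ Y : Cantor, ∀ n, PrefixOfSeq (T.f (seg Y n)) X}

/-- `T ≤_T Y` for a function tree `T` and a real `Y`. -/
def TreeRedToReal (T : FunTree) (Y : Cantor) : Prop := RecIn (oracleOf Y) T.f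

/-- `Y ≤_T T` for a real `Y` and a function tree `T` (the tree used as an oracle). -/
def RealRedToTree (Y : Cantor) (T : FunTree) : Prop := RecIn (oracleFn T.f) Y

/-- `S ≤_T T` between function trees. -/
def TreeRedToTree (S T : FunTree) : Prop := RecIn (oracleFn T.f) S.f

/-- `T` is recursively pointed: every path of `T` computes `T`. -/
def RecPointed (T : FunTree) : Prop := ∀ X ∈ Paths T, TreeRedToReal T X

/-- The binary value of a string (read most-significant-bit first); strings of equal
length are lexicographically ordered exactly as their values. -/
def natOfStr (σ : List Bool) : ℕ := σ.foldl (fun a b => 2 * a + cond b 1 0) 0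

/-- The length-`len` binary string with value `k`. -/
def strOfNat (len k : ℕ) : List Bool := (List.range len).map fun i => k.testBit (len - 1 - i)

/-- `l(σ) = Σ_{|τ|=|σ|, τ <_L σ} ν([τ])`, computed via the value correspondence between the
lexicographic order on strings of equal length and the numeric order of their values. -/
noncomputable def lfun (ν : MeasureTheory.Measure Cantor) (σ : List Bool) : ℝ :=
  ∑ k ∈ Finset.range (natOfStr σ), (ν (cyl (strOfNat σ.length k))).toReal

/-- `r(σ) = l(σ) + ν([σ])`. -/
noncomputable def rfun (ν : MeasureTheory.Measure Cantor) (σ : List Bool) : ℝ :=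
  lfun ν σ + (ν (cyl σ)).toReal

/-- `0.A`: the real number in `[0,1]` with binary expansion `A`. -/
noncomputable def realOf (A : Cantor) : ℝ := ∑' n : ℕ, cond (A n) ((2 : ℝ)⁻¹ ^ (n + 1)) 0

/-- The weight `2^{-|σ|}` of an (optional) string, for measuring Martin-Löf tests. -/
noncomputable def testWeight : Option (List Bool) → ℝ≥0∞
  | none => 0
  | some σ => (2 : ℝ≥0∞)⁻¹ ^ σ.length

/-- `V` is a Martin-Löf test: a uniformly computable enumeration whose `n`-th level has
total weight at most `2^{-n}`. -/
def MLTest (V : ℕ × ℕ → Option (List Bool)) : Prop :=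
  Computable V ∧ ∀ n, (∑' k : ℕ, testWeight (V (n, k))) ≤ (2 : ℝ≥0∞)⁻¹ ^ n

/-- `X` is covered by the test `V` (belongs to every level). -/
def MLCovered (V : ℕ × ℕ → Option (List Bool)) (X : Cantor) : Prop :=
  ∀ n, ∃ k σ, V (n, k) = some σ ∧ PrefixOfSeq σ X

/-- `X` is 1-random (Martin-Löf random). -/
def MLRandom (X : Cantor) : Prop := ∀ V, MLTest V → ¬MLCovered V X

/-- An antichain of Turing degrees (containing no computable set, closed under Turing
equivalence, with Turing-inequivalent members pairwise incomparable). -/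
def IsAntichainDeg (B : Set Cantor) : Prop :=
  (∀ X ∈ B, ¬Computable X) ∧ (∀ X ∈ B, ∀ Y, TEquiv Y X → Y ∈ B) ∧
  ∀ X ∈ B, ∀ Y ∈ B, ¬TEquiv X Y → ¬TRed X Y ∧ ¬TRed Y X

/-- A maximal antichain of Turing degrees. -/
def MaximalAntichainDeg (B : Set Cantor) : Prop :=
  IsAntichainDeg B ∧ ∀ Z ∉ B, ¬IsAntichainDeg (B ∪ degCl Z)

/-- A chain of Turing degrees. -/
def IsChainDeg (A : Set Cantor) : Prop :=
  (∀ X ∈ A, ∀ Y, TEquiv Y X → Y ∈ A) ∧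
  ∀ X ∈ A, ∀ Y ∈ A, ¬TEquiv X Y → TRed X Y ∨ TRed Y X

/-- A maximal chain of Turing degrees. -/
def MaximalChainDeg (A : Set Cantor) : Prop :=
  IsChainDeg A ∧ ∀ Z ∉ A, ¬IsChainDeg (A ∪ degCl Z)

/-- The first uncountable ordinal `ω₁`. -/
noncomputable def omega1 : Ordinal := (Cardinal.aleph 1).ord

section OracleInfra

open Encodable Part

variable {O : ℕ → ℕ} {α β γ σ : Type} [Primcodable α] [Primcodable β] [Primcodable γ]
  [Primcodable σ]

theorem OracleRecursiveIn.of_eq {f g : ℕ →. ℕ} (hf : OracleRecursiveIn O f) (H : ∀ n, f n = g n) :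
    OracleRecursiveIn O g := (funext H : f = g) ▸ hf

theorem OracleRecursiveIn.of_partrec {f : ℕ →. ℕ} (hf : Nat.Partrec f) : OracleRecursiveIn O f := by
  induction hf with
  | zero => exact .zero
  | succ => exact .succ
  | left => exact .left
  | right => exact .right
  | pair _ _ pf pg => exact .pair pf pg
  | comp _ _ pf pg => exact .comp pf pg
  | prec _ _ pf pg => exact .prec pf pg
  | rfind _ pf => exact .rfind pf

protected theorem OracleRecursiveIn.some : OracleRecursiveIn O Part.some :=
  OracleRecursiveIn.of_partrec Nat.Partrec.some

theorem OracleRecursiveIn.prec' {f g h : ℕ →. ℕ} (hf : OracleRecursiveIn O f) (hg : OracleRecursiveIn O g)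
    (hh : OracleRecursiveIn O h) :
    OracleRecursiveIn O fun a => (f a).bind fun n => n.rec (g a)
      fun y IH => do {let i ← IH; h (Nat.pair a (Nat.pair y i))} :=
  ((OracleRecursiveIn.prec hg hh).comp (OracleRecursiveIn.pair OracleRecursiveIn.some hf)).of_eq fun a =>
    Part.ext fun s => by simp [Seq.seq]

/-- Oracle-relative version of `Partrec`. -/
def PartrecIn (O : ℕ → ℕ) (f : α →. σ) : Prop :=
  OracleRecursiveIn O fun n => Part.bind (Encodable.decode (α := α) n) fun a => (f a).map encode

theorem PartrecIn.of_partrec {f : α →. σ} (hf : Partrec f) : PartrecIn O f :=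
  OracleRecursiveIn.of_partrec hf

theorem PartrecIn.of_eq {f g : α →. σ} (hf : PartrecIn O f) (H : ∀ a, f a = g a) :
    PartrecIn O g := (funext H : f = g) ▸ hf

theorem recIn_iff_partrecIn {f : α → σ} : RecIn O f ↔ PartrecIn O (f : α →. σ) := Iff.rfl

theorem RecIn.of_computable {f : α → σ} (hf : Computable f) : RecIn O f :=
  recIn_iff_partrecIn.2 (PartrecIn.of_partrec hf)

theorem PartrecIn.comp {f : β →. σ} {g : α → β} (hf : PartrecIn O f)
    (hg : PartrecIn O (g : α →. β)) : PartrecIn O fun a => f (g a) :=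
  (OracleRecursiveIn.comp hf hg).of_eq fun n => by
    simp; cases' e : Encodable.decode (α := α) n with a <;> simp [e, Encodable.encodek]

theorem RecIn.comp {f : β → σ} {g : α → β} (hf : RecIn O f) (hg : RecIn O g) :
    RecIn O fun a => f (g a) :=
  recIn_iff_partrecIn.2 <|
    (PartrecIn.comp (recIn_iff_partrecIn.1 hf) (recIn_iff_partrecIn.1 hg)).of_eq fun a => rfl

theorem RecIn.pair {f : α → β} {g : α → γ} (hf : RecIn O f) (hg : RecIn O g) :
    RecIn O fun a => (f a, g a) :=
  recIn_iff_partrecIn.2 <|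
    (OracleRecursiveIn.pair (recIn_iff_partrecIn.1 hf) (recIn_iff_partrecIn.1 hg)).of_eq fun n => by
      cases decode (α := α) n <;> simp [Seq.seq]

theorem PartrecIn.nat_rec {f : α → ℕ} {g : α →. σ} {h : α → ℕ × σ →. σ} (hf : RecIn O f)
    (hg : PartrecIn O g) (hh : PartrecIn O fun p : α × (ℕ × σ) => h p.1 p.2) :
    PartrecIn O fun a => (f a).rec (g a) fun y IH => IH.bind fun i => h a (y, i) :=
  (OracleRecursiveIn.prec' (recIn_iff_partrecIn.1 hf) hg hh).of_eq fun n => by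
    cases' e : decode (α := α) n with a <;> simp [e]
    induction' f a with m IH <;> simp
    rw [IH, Part.bind_map]
    congr; funext s
    simp [encodek]

theorem RecIn.nat_rec {f : α → ℕ} {g : α → σ} {h : α → ℕ × σ → σ} (hf : RecIn O f)
    (hg : RecIn O g) (hh : RecIn O fun p : α × (ℕ × σ) => h p.1 p.2) :
    RecIn O fun a => Nat.rec (motive := fun _ => σ) (g a) (fun y IH => h a (y, IH)) (f a) :=
  recIn_iff_partrecIn.2 <|
    (PartrecIn.nat_rec (h := fun a p => Part.some (h a p)) hf (recIn_iff_partrecIn.1 hg)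
      (recIn_iff_partrecIn.1 hh)).of_eq fun a => by
      simp; induction f a <;> simp [*]

theorem oracleOf_eq_encode (X : Cantor) (n : ℕ) : oracleOf X n = encode (X n) := by
  cases h : X n <;> simp [oracleOf, h]

theorem recIn_self (X : Cantor) : RecIn (oracleOf X) X :=
  OracleRecursiveIn.oracle.of_eq fun n => by
    simp [oracleOf_eq_encode, Part.ofOption]

theorem OracleRecursiveIn.trans' {f : ℕ →. ℕ} {O O' : ℕ → ℕ} (hf : OracleRecursiveIn O f)
    (hO : OracleRecursiveIn O' fun n => Part.some (O n)) : OracleRecursiveIn O' f := by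
  induction hf with
  | oracle => exact hO
  | zero => exact .zero
  | succ => exact .succ
  | left => exact .left
  | right => exact .right
  | pair _ _ pf pg => exact .pair pf pg
  | comp _ _ pf pg => exact .comp pf pg
  | prec _ _ pf pg => exact .prec pf pg
  | rfind _ pf => exact .rfind pf

theorem TRed.oracle {X Y : Cantor} (h : TRed X Y) :
    OracleRecursiveIn (oracleOf Y) fun n => Part.some (oracleOf X n) :=
  (h : OracleRecursiveIn (oracleOf Y) _).of_eq fun n => by
    simp [oracleOf_eq_encode, Part.ofOption]

theorem RecIn.trans {f : α → σ} {X Y : Cantor} (hf : RecIn (oracleOf X) f) (hXY : TRed X Y) :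
    RecIn (oracleOf Y) f :=
  OracleRecursiveIn.trans' hf hXY.oracle

end OracleInfra


section Stmt6Aux

open Encodable

theorem RecIn.of_eq {α σ : Type} [Primcodable α] [Primcodable σ] {O : ℕ → ℕ} {f g : α → σ}
    (hf : RecIn O f) (H : ∀ a, f a = g a) : RecIn O g := (funext H : f = g) ▸ hf

/-- The canonical path of `T` determined by the branch sequence `Y`. -/
def pathOf (T : FunTree) (Y : Cantor) : Cantor :=
  fun m => (T.f (seg Y (m + 1))).getD m false

def isZeroB (n : ℕ) : Bool := Nat.rec (motive := fun _ => Bool) true (fun _ _ => false) n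

def eqNat (a b : ℕ) : Bool := isZeroB ((a - b) + (b - a))

theorem eqNat_eq_true {a b : ℕ} : eqNat a b = true ↔ a = b := by
  unfold eqNat isZeroB
  cases e : (a - b) + (b - a) with
  | zero => show true = true ↔ a = b; simp; omega
  | succ k => show false = true ↔ a = b; simp; omega

theorem seg_succ (X : Cantor) (n : ℕ) : seg X (n + 1) = seg X n ++ [X n] := by
  simp [seg, List.range_succ]

theorem seg_length (X : Cantor) (n : ℕ) : (seg X n).length = n := by simp [seg]

theorem prefixOfSeq_iff {σ : List Bool} {X : Cantor} :
    PrefixOfSeq σ X ↔ ∀ i (h : i < σ.length), X i = σ[i] := by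
  constructor
  · intro H i h
    have h' : i < (seg X σ.length).length := by rw [H]; exact h
    have h2 := List.getElem_of_eq H h'
    simpa [seg] using h2
  · intro H
    apply List.ext_getElem (by simp [seg])
    intro i h1 h2
    simpa [seg] using H i h2

theorem seg_prefix (X : Cantor) {m n : ℕ} (h : m ≤ n) : seg X m <+: seg X n := by
  induction n, h using Nat.le_induction with
  | base => exact List.prefix_refl _
  | succ k hk ih => exact ih.trans (by rw [seg_succ]; exact List.prefix_append _ _)

theorem prefixOfSeq_seg (X : Cantor) (n : ℕ) : PrefixOfSeq (seg X n) X := by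
  show seg X (seg X n).length = seg X n
  rw [seg_length]

theorem prefix_of_prefixOfSeq {σ τ : List Bool} {X : Cantor} (h1 : PrefixOfSeq σ X)
    (h2 : PrefixOfSeq τ X) (h : σ.length ≤ τ.length) : σ <+: τ := by
  have := seg_prefix X h
  rwa [h1, h2] at this

theorem treeSeg_prefix (T : FunTree) (Y : Cantor) {m n : ℕ} (h : m ≤ n) :
    T.f (seg Y m) <+: T.f (seg Y n) := by
  induction n, h using Nat.le_induction with
  | base => exact List.prefix_refl _
  | succ k hk ih => exact ih.trans (by rw [seg_succ]; exact (T.extend _ (Y k)).1)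

theorem treeSeg_length (T : FunTree) (Y : Cantor) : ∀ n, n ≤ (T.f (seg Y n)).length
  | 0 => Nat.zero_le _
  | n + 1 => by
    have h1 := (T.extend (seg Y n) (Y n)).2
    have h2 := treeSeg_length T Y n
    rw [← seg_succ] at h1
    omega

theorem pathOf_spec (T : FunTree) (Y : Cantor) (n : ℕ) :
    PrefixOfSeq (T.f (seg Y n)) (pathOf T Y) := by
  rw [prefixOfSeq_iff]
  intro i hi
  have hlen : i < (T.f (seg Y (i + 1))).length :=
    lt_of_lt_of_le (Nat.lt_succ_self i) (treeSeg_length T Y (i + 1))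
  show (T.f (seg Y (i + 1))).getD i false = _
  rw [List.getD_eq_getElem _ _ hlen]
  rcases le_total (i + 1) n with h | h
  · exact (treeSeg_prefix T Y h).getElem hlen
  · exact ((treeSeg_prefix T Y h).getElem hi).symm

theorem pathOf_mem (T : FunTree) (Y : Cantor) : pathOf T Y ∈ Paths T :=
  ⟨Y, fun n => pathOf_spec T Y n⟩

theorem branch (T : FunTree) (Y : Cantor) (n : ℕ) (b : Bool) :
    PrefixOfSeq (T.f (seg Y n ++ [b])) (pathOf T Y) ↔ b = Y n := by
  constructor
  · intro h
    by_contra hne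
    have hY : PrefixOfSeq (T.f (seg Y n ++ [Y n])) (pathOf T Y) := by
      rw [← seg_succ]; exact pathOf_spec T Y (n + 1)
    have hb : b = !(Y n) := by cases b <;> cases h' : Y n <;> simp_all
    rw [hb] at h
    have hsplit := T.split (seg Y n)
    have key : ∀ τ₁ τ₂ : List Bool, PrefixOfSeq τ₁ (pathOf T Y) → PrefixOfSeq τ₂ (pathOf T Y) →
        τ₁ <+: τ₂ ∨ τ₂ <+: τ₁ := by
      intro τ₁ τ₂ h1 h2
      rcases le_total τ₁.length τ₂.length with hl | hl
      · exact Or.inl (prefix_of_prefixOfSeq h1 h2 hl)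
      · exact Or.inr (prefix_of_prefixOfSeq h2 h1 hl)
    cases h' : Y n with
    | true =>
      rw [h'] at h hY
      simp only [Bool.not_true] at h
      rcases key _ _ h hY with hc | hc
      · exact hsplit.1 hc
      · exact hsplit.2 hc
    | false =>
      rw [h'] at h hY
      simp only [Bool.not_false] at h
      rcases key _ _ h hY with hc | hc
      · exact hsplit.2 hc
      · exact hsplit.1 hc
  · intro h
    rw [h, ← seg_succ]
    exact pathOf_spec T Y (n + 1)

def recover (T : FunTree) (X : Cantor) : ℕ → List Bool
  | 0 => []
  | n + 1 =>
    recover T X n ++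
      [eqNat (encode (seg X (T.f (recover T X n ++ [true])).length))
        (encode (T.f (recover T X n ++ [true])))]

theorem eqNat_iff_prefixOfSeq {τ : List Bool} {X : Cantor} :
    eqNat (encode (seg X τ.length)) (encode τ) = true ↔ PrefixOfSeq τ X := by
  rw [eqNat_eq_true]
  exact ⟨fun h => encode_injective h, fun h => by rw [h]⟩

theorem recover_eq (T : FunTree) (Y : Cantor) : ∀ n, recover T (pathOf T Y) n = seg Y n
  | 0 => rfl
  | n + 1 => by
    have ih := recover_eq T Y n
    have hbit : eqNat (encode (seg (pathOf T Y) (T.f (seg Y n ++ [true])).length))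
        (encode (T.f (seg Y n ++ [true]))) = Y n := by
      cases hYn : Y n with
      | true => exact eqNat_iff_prefixOfSeq.2 ((branch T Y n true).2 hYn.symm)
      | false =>
        cases hb : eqNat (encode (seg (pathOf T Y) (T.f (seg Y n ++ [true])).length))
            (encode (T.f (seg Y n ++ [true]))) with
        | false => rfl
        | true =>
          have := (branch T Y n true).1 (eqNat_iff_prefixOfSeq.1 hb)
          rw [hYn] at this
          exact absurd this (by simp)
    show recover T (pathOf T Y) n ++ _ = _
    rw [ih, hbit, ← seg_succ]

theorem getD_concat (l : List Bool) (b : Bool) : (l ++ [b]).getD l.length false = b := by simp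

theorem yn_eq (T : FunTree) (Y : Cantor) (n : ℕ) :
    Y n = (recover T (pathOf T Y) (n + 1)).getD n false := by
  rw [recover_eq, seg_succ]
  have := getD_concat (seg Y n) (Y n)
  rw [seg_length] at this
  exact this.symm

theorem append_comp : Computable (fun q : List Bool × Bool => q.1 ++ [q.2]) :=
  (Primrec.list_append.comp Primrec.fst
    (Primrec.list_cons.comp Primrec.snd (Primrec.const []))).to_comp

theorem getD_comp : Computable (fun p : List Bool × ℕ => p.1.getD p.2 false) :=
  ((Primrec.list_getD false).comp Primrec.fst Primrec.snd).to_comp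

theorem seg_recIn (Z : Cantor) : RecIn (oracleOf Z) (seg Z) := by
  have h := RecIn.nat_rec (O := oracleOf Z) (f := fun n : ℕ => n)
    (g := fun _ : ℕ => ([] : List Bool)) (h := fun _ q => q.2 ++ [Z q.1])
    (RecIn.of_computable Computable.id) (RecIn.of_computable (Computable.const []))
    (RecIn.comp (RecIn.of_computable append_comp)
      (RecIn.pair (RecIn.of_computable (Computable.snd.comp Computable.snd))
        (RecIn.comp (recIn_self Z) (RecIn.of_computable (Computable.fst.comp Computable.snd)))))
  refine h.of_eq fun n => ?_
  induction n with
  | zero => rfl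
  | succ m ih =>
    show (Nat.rec (motive := fun _ => List Bool) [] (fun y IH => IH ++ [Z y]) m) ++ [Z m] = _
    rw [ih, seg_succ]

theorem isZeroB_recIn {O : ℕ → ℕ} : RecIn O isZeroB :=
  (RecIn.nat_rec (f := fun n : ℕ => n) (g := fun _ : ℕ => true)
    (h := fun _ _ => false) (.of_computable .id) (.of_computable (.const true))
    (.of_computable (.const false))).of_eq fun n => rfl

theorem eqNat_recIn {O : ℕ → ℕ} : RecIn O (fun p : ℕ × ℕ => eqNat p.1 p.2) :=
  RecIn.comp isZeroB_recIn (RecIn.of_computable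
    ((Primrec.nat_add.comp (Primrec.nat_sub.comp Primrec.fst Primrec.snd)
      (Primrec.nat_sub.comp Primrec.snd Primrec.fst)).to_comp))

theorem recover_recIn (T : FunTree) (X : Cantor) (hTf : RecIn (oracleOf X) T.f) :
    RecIn (oracleOf X) (recover T X) := by
  have happ : RecIn (oracleOf X) (fun σ : List Bool => σ ++ [true]) :=
    .of_computable ((Primrec.list_append.comp Primrec.id (Primrec.const [true])).to_comp)
  have hτ : RecIn (oracleOf X) (fun σ : List Bool => T.f (σ ++ [true])) := hTf.comp happ
  have hseglen : RecIn (oracleOf X) (fun σ : List Bool => seg X (T.f (σ ++ [true])).length) :=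
    (seg_recIn X).comp ((RecIn.of_computable Primrec.list_length.to_comp).comp hτ)
  have hbit : RecIn (oracleOf X) (fun σ : List Bool =>
      eqNat (encode (seg X (T.f (σ ++ [true])).length)) (encode (T.f (σ ++ [true])))) :=
    eqNat_recIn.comp (RecIn.pair ((RecIn.of_computable Computable.encode).comp hseglen)
      ((RecIn.of_computable Computable.encode).comp hτ))
  have hstep : RecIn (oracleOf X) (fun σ : List Bool =>
      σ ++ [eqNat (encode (seg X (T.f (σ ++ [true])).length)) (encode (T.f (σ ++ [true])))]) :=
    (RecIn.of_computable append_comp).comp (RecIn.pair (.of_computable .id) hbit)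
  have h := RecIn.nat_rec (O := oracleOf X) (f := fun n : ℕ => n)
    (g := fun _ : ℕ => ([] : List Bool))
    (h := fun _ q => q.2 ++
      [eqNat (encode (seg X (T.f (q.2 ++ [true])).length)) (encode (T.f (q.2 ++ [true])))])
    (.of_computable .id) (.of_computable (.const []))
    (hstep.comp (RecIn.of_computable (Computable.snd.comp Computable.snd)))
  refine h.of_eq fun n => ?_
  induction n with
  | zero => rfl
  | succ m ih =>
    show (Nat.rec (motive := fun _ => List Bool) [] _ m) ++ _ = _
    rw [ih]
    rfl

end Stmt6Aux


/-- for a recursively pointed function tree `T` and any `Y`, `T ≤_T Y` iff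
some path of `T` is Turing equivalent to `Y`. -/
theorem stmt6 (T : FunTree) (hT : RecPointed T) (Y : Cantor) :
    TreeRedToReal T Y ↔ ∃ X ∈ Paths T, TEquiv X Y := by
  constructor
  · intro hTY
    refine ⟨pathOf T Y, pathOf_mem T Y, ?_, ?_⟩
    · -- TRed (pathOf T Y) Y
      exact (RecIn.comp (.of_computable getD_comp)
        (RecIn.pair (hTY.comp ((seg_recIn Y).comp (.of_computable Computable.succ)))
          (.of_computable .id))).of_eq fun m => rfl
    · -- TRed Y (pathOf T Y)
      have hTf := hT _ (pathOf_mem T Y)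
      have hrec := recover_recIn T (pathOf T Y) hTf
      exact (RecIn.comp (.of_computable getD_comp)
        (RecIn.pair (hrec.comp (.of_computable Computable.succ))
          (.of_computable .id))).of_eq fun n => (yn_eq T Y n).symm
  · rintro ⟨X, hX, hXY, hYX⟩
    exact RecIn.trans (hT X hX) hXY
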